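/- arXiv:1104.3054 — 2 statements merged into one kernel-verified Lean document; each statement's English description precedes it below -/
import Mathlib

section
/- Consider the Markov chain gadget with states q, s₀, s₁, r₀, r₁ where from q one moves to s₀ with probability 1/3 and to s₁ with probability 2/3; from s₀ one returns to q with probability 1/3 and moves to r₀ with probability 2/3; from s₁ one returns to q with probability 2/3 and moves to r₁ with probability 1/3; and r₀, r₁ are absorbing. Then starting from q, the probability of eventually being absorbed in r₀ equals 1/2, and likewise for r₁. -/
/-- Transition matrix of the 1/3–2/3 gadget, on states
`0 = q`, `1 = s₀`, `2 = s₁`, `3 = r₀`, `4 = r₁`. -/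
noncomputable def gadget : Matrix (Fin 5) (Fin 5) ℝ :=
  !![0, 1/3, 2/3, 0, 0;
     1/3, 0, 0, 2/3, 0;
     2/3, 0, 0, 0, 1/3;
     0, 0, 0, 1, 0;
     0, 0, 0, 0, 1]


lemma gadget_even (k : ℕ) :
    (gadget ^ (2*k)) 0 0 = (5/9:ℝ)^k ∧ (gadget ^ (2*k)) 0 1 = 0 ∧
    (gadget ^ (2*k)) 0 2 = 0 ∧ (gadget ^ (2*k)) 0 3 = (1/2)*(1 - (5/9:ℝ)^k) ∧
    (gadget ^ (2*k)) 0 4 = (1/2)*(1 - (5/9:ℝ)^k) := by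
  induction k with
  | zero => simp [Matrix.one_apply]
  | succ n ih =>
    obtain ⟨h0, h1, h2, h3, h4⟩ := ih
    have e : 2*(n+1) = (2*n) + 1 + 1 := by ring
    rw [e]
    have expand : ∀ j : Fin 5, (gadget ^ (2*n+1+1)) 0 j =
        ∑ i, (∑ l, (gadget ^ (2*n)) 0 l * gadget l i) * gadget i j := by
      intro j
      simp only [pow_succ, Matrix.mul_apply]
    set A := gadget ^ (2*n) with hA
    refine ⟨?_, ?_, ?_, ?_, ?_⟩ <;>
      rw [expand] <;>
      simp only [Fin.sum_univ_five, h0, h1, h2, h3, h4, gadget,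
        Matrix.cons_val', Matrix.cons_val_zero, Matrix.cons_val_one,
        Matrix.head_cons, Matrix.empty_val', Matrix.cons_val_fin_one,
        Matrix.head_fin_const, Matrix.cons_val_two, Matrix.tail_cons,
        Matrix.cons_val_three, Matrix.cons_val_four, Matrix.of_apply] <;>
      ring

lemma gadget_odd (k : ℕ) :
    (gadget ^ (2*k+1)) 0 3 = (1/2)*(1 - (5/9:ℝ)^k) ∧
    (gadget ^ (2*k+1)) 0 4 = (1/2)*(1 - (5/9:ℝ)^k) := by
  obtain ⟨h0, h1, h2, h3, h4⟩ := gadget_even k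
  set A := gadget ^ (2*k) with hA
  constructor <;>
    rw [pow_succ, Matrix.mul_apply, ← hA] <;>
    simp only [Fin.sum_univ_five, h0, h1, h2, h3, h4, gadget,
      Matrix.cons_val', Matrix.cons_val_zero, Matrix.cons_val_one,
      Matrix.head_cons, Matrix.empty_val', Matrix.cons_val_fin_one,
      Matrix.head_fin_const, Matrix.cons_val_two, Matrix.tail_cons,
      Matrix.cons_val_three, Matrix.cons_val_four, Matrix.of_apply] <;>
    ring

lemma gadget_formula (p : ℕ) :
    (gadget ^ p) 0 3 = (1/2)*(1 - (5/9:ℝ)^(p/2)) ∧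
    (gadget ^ p) 0 4 = (1/2)*(1 - (5/9:ℝ)^(p/2)) := by
  rcases Nat.even_or_odd p with ⟨k, hk⟩ | ⟨k, hk⟩
  · subst hk
    have : (k + k) / 2 = k := by omega
    rw [this, show k + k = 2*k by ring]
    exact gadget_even k |>.2.2.2
  · subst hk
    have : (2*k + 1) / 2 = k := by omega
    rw [this]
    exact gadget_odd k

/-- starting from `q`, the probability of being in the absorbing
state `r₀` after `p` steps converges to `1/2`, and likewise for `r₁`. -/
theorem stmt_3 :
    Filter.Tendsto (fun p : ℕ => (gadget ^ p) 0 3) Filter.atTop (nhds (1/2)) ∧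
    Filter.Tendsto (fun p : ℕ => (gadget ^ p) 0 4) Filter.atTop (nhds (1/2)) := by
  have hdiv : Filter.Tendsto (fun p : ℕ => p / 2) Filter.atTop Filter.atTop := by
    apply Filter.tendsto_atTop_atTop.2
    intro b
    exact ⟨2*b, fun a ha => by omega⟩
  have hpow : Filter.Tendsto (fun p : ℕ => (5/9:ℝ)^(p/2)) Filter.atTop (nhds 0) := by
    exact (tendsto_pow_atTop_nhds_zero_of_lt_one (by norm_num) (by norm_num)).comp hdiv
  have h : Filter.Tendsto (fun p : ℕ => (1/2)*(1 - (5/9:ℝ)^(p/2))) Filter.atTop (nhds (1/2)) := by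
    have := ((tendsto_const_nhds (x := (1:ℝ)) (f := (Filter.atTop : Filter ℕ))).sub hpow).const_mul (1/2 : ℝ)
    simpa using this
  constructor
  · exact h.congr fun p => ((gadget_formula p).1).symm
  · exact h.congr fun p => ((gadget_formula p).2).symm
end

section
/- Let n = |Q| and suppose for each i < n, the action of the block ŵ_i = check(a,q_i)·*·apply(a,q_i) on distributions fixes all states q_j for j ≠ i (and all barred states), and sends δ_{q_i} to the barred version of the one-step distribution M_a(q_i). Then reading the concatenation ŵ_0 ⋯ ŵ_{n−1}·merge from any distribution δ over Q yields exactly the distribution δ·M_a over Q. -/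
variable {n : ℕ}

/-- Action of a stochastic matrix on a row vector. -/
def step {S : Type*} [Fintype S] (δ : S → ℝ) (N : S → S → ℝ) : S → ℝ :=
  fun t => ∑ s, δ s * N s t

/-- A vector over `Q = Fin n`, extended by `0` to `Fin n ⊕ Fin n`, where
`Sum.inr q` is the barred copy `q̄`. -/
def emb (δ : Fin n → ℝ) : Fin n ⊕ Fin n → ℝ
  | Sum.inl q => δ q
  | Sum.inr _ => 0

/-- The matrix of the `merge` letter: each barred state `q̄` is replaced by `q`. -/
def mergeMat : (Fin n ⊕ Fin n) → (Fin n ⊕ Fin n) → ℝ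
  | Sum.inl q, t => if t = Sum.inl q then 1 else 0
  | Sum.inr q, t => if t = Sum.inl q then 1 else 0

/-- if for each `i < n` the action `N i` of the block
`ŵᵢ = check(a,qᵢ)·*·apply(a,qᵢ)` fixes all states `q_j` for `j ≠ i` and all
barred states, and sends `δ_{qᵢ}` to the barred version of the one-step
distribution `M_a(qᵢ)`, then reading `ŵ₀ ⋯ ŵ_{n−1}·merge` from any
distribution `δ` over `Q` yields exactly the distribution `δ·M_a`. -/
theorem stmt_15 (M : Fin n → Fin n → ℝ)
    (hM0 : ∀ s t, 0 ≤ M s t) (hM1 : ∀ s, ∑ t, M s t = 1)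
    (N : Fin n → (Fin n ⊕ Fin n) → (Fin n ⊕ Fin n) → ℝ)
    (hfix : ∀ i j, j ≠ i → ∀ t, N i (Sum.inl j) t = if t = Sum.inl j then 1 else 0)
    (hbar : ∀ i q t, N i (Sum.inr q) t = if t = Sum.inr q then 1 else 0)
    (hact : ∀ i t, N i (Sum.inl i) t = match t with
      | Sum.inl _ => 0
      | Sum.inr q' => M i q')
    (δ : Fin n → ℝ) (hδ0 : ∀ q, 0 ≤ δ q) (hδ1 : ∑ q, δ q = 1) :
    List.foldl step (emb δ) (List.ofFn N ++ [mergeMat])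
      = emb (fun t => ∑ s, δ s * M s t) := by
  classical
  set D : ℕ → (Fin n ⊕ Fin n) → ℝ := fun k t => match t with
    | Sum.inl j => if k ≤ j.val then δ j else 0
    | Sum.inr q => ∑ s, if s.val < k then δ s * M s q else 0 with hD
  have hstep : ∀ k (hk : k < n), step (D k) (N ⟨k, hk⟩) = D (k + 1) := by
    intro k hk
    funext t
    cases t with
    | inl j0 =>
      have h2 : ∀ q : Fin n, D k (Sum.inr q) * N ⟨k, hk⟩ (Sum.inr q) (Sum.inl j0) = 0 := by
        intro q; rw [hbar]; simp
      have h1 : ∑ j : Fin n, D k (Sum.inl j) * N ⟨k, hk⟩ (Sum.inl j) (Sum.inl j0)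
          = if k + 1 ≤ j0.val then δ j0 else 0 := by
        rw [Finset.sum_eq_single j0]
        · by_cases hji : j0 = (⟨k, hk⟩ : Fin n)
          · rw [hji, hact]
            simp only [hD]
            have : ¬ (k + 1 ≤ ((⟨k, hk⟩ : Fin n) : ℕ)) := by simp
            simp [this]
          · rw [hfix _ _ hji]
            have hne : j0.val ≠ k := fun h => hji (Fin.ext h)
            simp only [hD, if_pos rfl, mul_one]
            have : (k ≤ j0.val) ↔ (k + 1 ≤ j0.val) := by omega
            simp [this]
        · intro j _ hj
          by_cases hji : j = (⟨k, hk⟩ : Fin n)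
          · rw [hji, hact]; simp
          · rw [hfix _ _ hji]
            have : Sum.inl (α := Fin n) (β := Fin n) j0 ≠ Sum.inl j := by
              simpa using hj.symm
            simp [this]
        · simp
      simp only [step, Fintype.sum_sum_type]
      rw [Finset.sum_congr rfl (fun q _ => h2 q), h1]
      simp [hD]
    | inr q0 =>
      have h1 : ∑ j : Fin n, D k (Sum.inl j) * N ⟨k, hk⟩ (Sum.inl j) (Sum.inr q0)
          = δ ⟨k, hk⟩ * M ⟨k, hk⟩ q0 := by
        rw [Finset.sum_eq_single (⟨k, hk⟩ : Fin n)]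
        · rw [hact]; simp [hD]
        · intro j _ hj
          rw [hfix _ _ hj]; simp
        · simp
      have h2 : ∑ q : Fin n, D k (Sum.inr q) * N ⟨k, hk⟩ (Sum.inr q) (Sum.inr q0)
          = D k (Sum.inr q0) := by
        rw [Finset.sum_eq_single q0]
        · rw [hbar]; simp
        · intro q _ hq
          rw [hbar]
          have : Sum.inr (α := Fin n) (β := Fin n) q0 ≠ Sum.inr q := by
            simpa using Ne.symm hq
          simp [this]
        · simp
      simp only [step, Fintype.sum_sum_type]
      rw [Finset.sum_congr rfl (fun q _ => by rfl), h1, h2]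
      simp only [hD]
      rw [Finset.sum_congr rfl (fun (s : Fin n) _ => show
          (if s.val < k + 1 then δ s * M s q0 else 0)
            = (if s.val < k then δ s * M s q0 else 0)
              + (if s = (⟨k, hk⟩ : Fin n) then δ s * M s q0 else 0) by
          by_cases hs : s = (⟨k, hk⟩ : Fin n)
          · subst hs; simp
          · have : s.val ≠ k := fun h => hs (Fin.ext h)
            have h1 : (s.val < k + 1) ↔ (s.val < k) := by omega
            simp [hs, h1]), Finset.sum_add_distrib, Finset.sum_ite_eq' Finset.univ]
      simp [add_comm]
  have hfold : ∀ m k, k + m = n →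
      List.foldl step (D k) (((List.finRange n).drop k).map N) = D n := by
    intro m
    induction m with
    | zero =>
      intro k hk
      have hkn : k = n := by omega
      subst hkn
      rw [List.drop_eq_nil_of_le (by simp)]
      rfl
    | succ m ih =>
      intro k hk
      have hkn : k < n := by omega
      have hlen : k < (List.finRange n).length := by simpa using hkn
      rw [List.drop_eq_getElem_cons hlen, List.map_cons, List.foldl_cons]
      have hget : (List.finRange n)[k] = (⟨k, hkn⟩ : Fin n) := by
        simp [List.getElem_finRange, Fin.cast]
      rw [hget, hstep k hkn]
      exact ih (k + 1) (by omega)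
  have h0 : emb δ = D 0 := by
    funext t
    cases t with
    | inl j => simp [emb, hD]
    | inr q => simp [emb, hD]
  have hmerge : step (D n) mergeMat = emb (fun t => ∑ s, δ s * M s t) := by
    funext t
    have h1 : ∀ j : Fin n, D n (Sum.inl j) * mergeMat (Sum.inl j) t = 0 := by
      intro j
      have : ¬ (n ≤ j.val) := by omega
      simp [hD, this]
    simp only [step, Fintype.sum_sum_type]
    rw [Finset.sum_congr rfl (fun j _ => h1 j)]
    cases t with
    | inl t0 =>
      have h2 : ∀ q : Fin n, D n (Sum.inr q) * mergeMat (Sum.inr q) (Sum.inl t0)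
          = if q = t0 then D n (Sum.inr t0) else 0 := by
        intro q
        by_cases hq : q = t0
        · subst hq; simp [mergeMat]
        · have : Sum.inl (α := Fin n) (β := Fin n) t0 ≠ Sum.inl q := by simpa using Ne.symm hq
          simp [mergeMat, this, hq]
      rw [Finset.sum_congr rfl (fun q _ => h2 q), Finset.sum_ite_eq' Finset.univ]
      have : ∀ s : Fin n, s.val < n := fun s => s.isLt
      simp [emb, hD, this]
    | inr t0 =>
      have h2 : ∀ q : Fin n, D n (Sum.inr q) * mergeMat (Sum.inr q) (Sum.inr t0) = 0 := by
        intro q; simp [mergeMat]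
      rw [Finset.sum_congr rfl (fun q _ => h2 q)]
      simp [emb]
  calc List.foldl step (emb δ) (List.ofFn N ++ [mergeMat])
      = step (List.foldl step (D 0) (List.ofFn N)) mergeMat := by
        rw [h0]; simp [List.foldl_append]
    _ = emb (fun t => ∑ s, δ s * M s t) := by
        rw [List.ofFn_eq_map]
        have := hfold n 0 (by omega)
        simp only [List.drop_zero] at this
        rw [this, hmerge]
end
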